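/- Let S be a string and Y a string such that YY is a subsequence of S. Then YY is a maximal square subsequence of S if and only if YY is not right-extendable, not left-extendable, and not inner-extendable in S. -/

import Mathlib

open List

variable {α : Type*}

/-- The substring of `S` from 1-indexed position `a` to position `b`, inclusive
(empty when `a > b`). -/
def substr (S : List α) (a b : ℕ) : List α := (S.drop (a - 1)).take (b + 1 - a)

/-- `X` is a square subsequence of `S`. -/
def IsSquareSubseq (S X : List α) : Prop := (∃ Y, X = Y ++ Y) ∧ X <+ S

/-- `X` is a maximal square subsequence of `S`: it is a square subsequence of `S` and
is not a proper subsequence of any other square subsequence of `S`. -/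
def IsMaxSquareSubseq (S X : List α) : Prop :=
  IsSquareSubseq S X ∧ ∀ X', IsSquareSubseq S X' → X <+ X' → X' = X

/-- The square subsequence `Y ++ Y` is right-extendable in `S`. -/
def RightExtendable (S Y : List α) : Prop := ∃ y : α, Y ++ [y] ++ Y ++ [y] <+ S

/-- The square subsequence `Y ++ Y` is left-extendable in `S`. -/
def LeftExtendable (S Y : List α) : Prop := ∃ y : α, [y] ++ Y ++ [y] ++ Y <+ S

/-- The square subsequence `Y ++ Y` is inner-extendable in `S`. -/
def InnerExtendable (S Y : List α) : Prop :=
  ∃ (y : α) (Y₁ Y₂ : List α), Y = Y₁ ++ Y₂ ∧ Y₁ ≠ [] ∧ Y₂ ≠ [] ∧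
    Y₁ ++ [y] ++ Y₂ ++ Y₁ ++ [y] ++ Y₂ <+ S

/-- `X` is a `k`-repeating subsequence of `S`: the `k`-fold concatenation of `X`
is a subsequence of `S`. -/
def IsKRep (k : ℕ) (S X : List α) : Prop := (List.replicate k X).flatten <+ S

/-- `X` is a maximal `k`-repeating subsequence of `S`: the only `k`-repeating
subsequence of `S` having `X` as a subsequence is `X` itself. -/
def IsMaxKRep (k : ℕ) (S X : List α) : Prop :=
  IsKRep k S X ∧ ∀ Y, IsKRep k S Y → X <+ Y → Y = X

/-- A `σ`-split point for `A` and `B` in `S`: a strictly increasing `k`-tuple of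
1-indexed positions of `S` carrying `σ`, such that around each position `p i` one
can place `A` immediately to its left and `B` immediately to its right within a
window `[a i, b i]`, with consecutive windows disjoint (`b i < a (i+1)`). -/
def IsSplitPoint (S : List α) (σ : α) (A B : List α) (k : ℕ) (p : Fin k → ℕ) : Prop :=
  StrictMono p ∧
  (∀ i, 1 ≤ p i ∧ p i ≤ S.length ∧ substr S (p i) (p i) = [σ]) ∧
  ∃ a b : Fin k → ℕ,
    (∀ i, 1 ≤ a i ∧ a i ≤ p i ∧ p i ≤ b i ∧ b i ≤ S.length ∧
      A <+ substr S (a i) (p i - 1) ∧ B <+ substr S (p i + 1) (b i)) ∧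
    ∀ i j : Fin k, (i : ℕ) + 1 = (j : ℕ) → b i < a j

/-- A `σ`-start for `σ^r` in `S`: a strictly increasing `k`-tuple of 1-indexed
positions of `S` carrying `σ`, such that (with `p (k+1) = |S| + 1`) the string
`σ^r` is a subsequence of `S[p j .. p (j+1) − 1]` for every `j`. -/
def IsSigmaStart (S : List α) (σ : α) (r k : ℕ) (p : Fin k → ℕ) : Prop :=
  StrictMono p ∧
  (∀ i, 1 ≤ p i ∧ p i ≤ S.length ∧ substr S (p i) (p i) = [σ]) ∧
  ∀ i : Fin k, List.replicate r σ <+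
    substr S (p i) ((if h : (i : ℕ) + 1 < k then p ⟨(i : ℕ) + 1, h⟩ else S.length + 1) - 1)

/-- `W` is a maximal common subsequence of `T₁` and `T₂` containing `X`. -/
def IsMCSContaining (T₁ T₂ X W : List α) : Prop :=
  X <+ W ∧ W <+ T₁ ∧ W <+ T₂ ∧ ∀ W', W <+ W' → W' <+ T₁ → W' <+ T₂ → W' = W

/-- `p` is the 1-indexed position of the `t`-th occurrence (1-indexed `t`) of `σ` in `S`:
`S[p] = σ` and exactly `t - 1` occurrences of `σ` lie strictly before position `p`. -/
def NthOccPos [DecidableEq α] (S : List α) (σ : α) (t p : ℕ) : Prop :=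
  1 ≤ p ∧ p ≤ S.length ∧ substr S p p = [σ] ∧ (substr S 1 (p - 1)).count σ = t - 1

/-- `j` is the leftmost anchor of `Y` with position `i` in `S`: the smallest index `j`
such that `Y` is a subsequence of `S[i..j]`. -/
def LeftmostAnchor (S Y : List α) (i j : ℕ) : Prop :=
  Y <+ substr S i j ∧ ∀ j', Y <+ substr S i j' → j ≤ j'

/-- `Y` is an Algorithm-1 output for `S` and `σ` (Algorithm 1 of the paper), where
`ℓ = count σ S` and `e = ⌊ℓ/2⌋`. -/
def Alg1Output [DecidableEq α] (S : List α) (σ : α) (Y : List α) : Prop :=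
  ∃ (i1 ie1 : ℕ) (Y₀ : List α),
    NthOccPos S σ 1 i1 ∧
    NthOccPos S σ (S.count σ / 2 + 1) ie1 ∧
    IsMCSContaining (substr S i1 (ie1 - 1)) (substr S ie1 S.length)
      (List.replicate (S.count σ / 2) σ) Y₀ ∧
    ((Y = Y₀ ∧ (Odd (S.count σ) → ∀ ie2, NthOccPos S σ (S.count σ / 2 + 2) ie2 →
        ¬ Y₀ <+ substr S ie2 S.length)) ∨
     (Odd (S.count σ) ∧ ∃ ie2, NthOccPos S σ (S.count σ / 2 + 2) ie2 ∧
        Y₀ <+ substr S ie2 S.length ∧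
        IsMCSContaining (substr S i1 (ie2 - 1)) (substr S ie2 S.length) Y₀ Y))

/-- `Z` is an Algorithm-2 output for `S` and `σ` built from the Algorithm-1 output `Y`
(Algorithm 2 of the paper). -/
def Alg2Output [DecidableEq α] (S : List α) (σ : α) (Y Z : List α) : Prop :=
  ∃ (i1 i2 j1 : ℕ) (Z₀ : List α),
    NthOccPos S σ 1 i1 ∧ NthOccPos S σ 2 i2 ∧
    LeftmostAnchor S Y i1 j1 ∧
    IsMCSContaining (substr S 1 j1) (substr S (j1 + 1) S.length) Y Z₀ ∧
    ((Z = Z₀ ∧ (Odd (S.count σ) → ∀ j2, LeftmostAnchor S Y i2 j2 →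
        ¬ Z₀ <+ substr S (j2 + 1) S.length)) ∨
     (Odd (S.count σ) ∧ ∃ j2, LeftmostAnchor S Y i2 j2 ∧
        Z₀ <+ substr S (j2 + 1) S.length ∧
        IsMCSContaining (substr S 1 j2) (substr S (j2 + 1) S.length) Z₀ Z))

lemma exists_insert_of_sublist_ne {Y Z : List α} (h : Y <+ Z) (hne : Y ≠ Z) :
    ∃ (Y₁ Y₂ : List α) (y : α), Y = Y₁ ++ Y₂ ∧ Y₁ ++ y :: Y₂ <+ Z := by
  induction h with
  | slnil => exact absurd rfl hne
  | cons a h ih =>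
    exact ⟨[], _, a, rfl, (h.cons₂ a)⟩
  | @cons_cons l₁ l₂ a h ih =>
    rcases eq_or_ne l₁ l₂ with heq | heq
    · exact absurd (by rw [heq]) hne
    · obtain ⟨Y₁, Y₂, y, hY, hs⟩ := ih heq
      exact ⟨a :: Y₁, Y₂, y, by rw [hY]; rfl, (hs.cons₂ a)⟩

lemma sublist_of_sq_sublist_sq {Y Z : List α} (h : Y ++ Y <+ Z ++ Z) : Y <+ Z := by
  rw [List.sublist_append_iff] at h
  obtain ⟨l₁, l₂, heq, h1, h2⟩ := h
  by_cases hl : Y.length ≤ l₁.length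
  · have hp : Y <+: l₁ :=
      List.prefix_of_prefix_length_le ⟨Y, rfl⟩ ⟨l₂, heq.symm⟩ hl
    exact hp.sublist.trans h1
  · have hlen : Y.length ≤ l₂.length := by
      have := congrArg List.length heq
      simp [List.length_append] at this
      omega
    have hs : Y <:+ l₂ :=
      List.suffix_of_suffix_length_le ⟨Y, rfl⟩ ⟨l₁, heq.symm⟩ hlen
    exact hs.sublist.trans h2

/-- If `YY` is a subsequence of `S`, then `YY` is a maximal square
subsequence of `S` iff `YY` is not right-, not left-, and not inner-extendable in `S`. -/
theorem maximal_square_iff_not_extendable {α : Type*} (S Y : List α)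
    (h : Y ++ Y <+ S) :
    IsMaxSquareSubseq S (Y ++ Y) ↔
      ¬ RightExtendable S Y ∧ ¬ LeftExtendable S Y ∧ ¬ InnerExtendable S Y := by
  constructor
  · rintro ⟨-, hmax⟩
    refine ⟨?_, ?_, ?_⟩
    · rintro ⟨y, hy⟩
      have hsq : IsSquareSubseq S ((Y ++ [y]) ++ (Y ++ [y])) :=
        ⟨⟨Y ++ [y], rfl⟩, by simpa [List.append_assoc] using hy⟩
      have hsub : Y ++ Y <+ (Y ++ [y]) ++ (Y ++ [y]) :=
        List.Sublist.append (List.sublist_append_left _ _) (List.sublist_append_left _ _)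
      have := hmax _ hsq hsub
      have := congrArg List.length this
      simp at this; omega
    · rintro ⟨y, hy⟩
      have hsq : IsSquareSubseq S (([y] ++ Y) ++ ([y] ++ Y)) :=
        ⟨⟨[y] ++ Y, rfl⟩, by simpa [List.append_assoc] using hy⟩
      have hsub : Y ++ Y <+ ([y] ++ Y) ++ ([y] ++ Y) :=
        List.Sublist.append (List.sublist_append_right _ _) (List.sublist_append_right _ _)
      have := hmax _ hsq hsub
      have := congrArg List.length this
      simp at this; omega
    · rintro ⟨y, Y₁, Y₂, hY, h1, h2, hy⟩
      have hsq : IsSquareSubseq S ((Y₁ ++ [y] ++ Y₂) ++ (Y₁ ++ [y] ++ Y₂)) :=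
        ⟨⟨Y₁ ++ [y] ++ Y₂, rfl⟩, by simpa [List.append_assoc] using hy⟩
      have hs1 : Y <+ Y₁ ++ [y] ++ Y₂ := by
        rw [hY, List.append_assoc]
        exact List.Sublist.append_left (List.sublist_cons_self y Y₂) Y₁
      have hsub : Y ++ Y <+ (Y₁ ++ [y] ++ Y₂) ++ (Y₁ ++ [y] ++ Y₂) :=
        List.Sublist.append hs1 hs1
      have := hmax _ hsq hsub
      have := congrArg List.length this
      simp [hY] at this; omega
  · rintro ⟨hr, hl, hi⟩
    refine ⟨⟨⟨Y, rfl⟩, h⟩, ?_⟩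
    rintro X' ⟨⟨Z, rfl⟩, hZS⟩ hsub
    by_contra hne
    have hYZ : Y <+ Z := sublist_of_sq_sublist_sq hsub
    have hne' : Y ≠ Z := by rintro rfl; exact hne rfl
    obtain ⟨Y₁, Y₂, y, hYeq, hins⟩ := exists_insert_of_sublist_ne hYZ hne'
    have hins2 : (Y₁ ++ y :: Y₂) ++ (Y₁ ++ y :: Y₂) <+ S :=
      (List.Sublist.append hins hins).trans hZS
    rcases Y₁.eq_nil_or_concat with h1 | h1
    · subst h1
      simp only [List.nil_append] at hYeq hins2
      subst hYeq
      exact hl ⟨y, by simpa [List.append_assoc] using hins2⟩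
    · rcases Y₂.eq_nil_or_concat with h2 | h2
      · subst h2
        simp only [List.append_nil] at hYeq
        subst hYeq
        exact hr ⟨y, by simpa [List.append_assoc] using hins2⟩
      · refine hi ⟨y, Y₁, Y₂, hYeq, ?_, ?_, ?_⟩
        · obtain ⟨a, b, rfl⟩ := h1; simp
        · obtain ⟨a, b, rfl⟩ := h2; simp
        · simpa [List.append_assoc] using hins2
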